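/- arXiv:1902.03854 — 2 statements merged into one kernel-verified Lean document; each statement's English description precedes it below -/
import Mathlib

section
/- Let D be a finite weighted directed graph without bilateral arcs, i.e., for all distinct nodes i, j it is not the case that both the arc (i,j) and the arc (j,i) are present (equivalently W_ij · W_ji = 0 for the weight matrix W of D). Let G be the undirected underlying graph of D, with weighted adjacency matrix W(G) = W + Wᵀ. Then for every stratus l = 0, 1, …, diam(G), the vector of directed local l-adjacency clustering coefficients of D equals one half of the vector of local l-adjacency clustering coefficients of G: c^all(l) = c(l)/2. -/
open Matrix Finset

/-- The weight of a walk: the sum of the weights of its (directed) edges. For a symmetric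
weight function this is the sum of the weights of the edges of the walk. -/
noncomputable def walkWeight {n : ℕ} {G : SimpleGraph (Fin n)} (w : Fin n → Fin n → ℝ)
    {i j : Fin n} (p : G.Walk i j) : ℝ :=
  (p.darts.map fun d => w d.fst d.snd).sum

/-- `wgeo G w i j l` is the minimum (infimum) over all walks of length `l` from `i` to `j`
of their total weights.  When `l = d(i,j)`, the walks of length `l` from `i` to `j` are
exactly the geodesics from `i` to `j`, so this is the quantity `w_ij(l)` of the paper. -/
noncomputable def wgeo {n : ℕ} (G : SimpleGraph (Fin n)) (w : Fin n → Fin n → ℝ)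
    (i j : Fin n) (l : ℕ) : ℝ :=
  sInf {x : ℝ | ∃ p : G.Walk i j, p.length = l ∧ walkWeight w p = x}

/-- `Nset G i l` is the set `N_i(l)` of nodes at geodesic distance `l` from `i`. -/
noncomputable def Nset {n : ℕ} (G : SimpleGraph (Fin n)) (i : Fin n) (l : ℕ) : Finset (Fin n) :=
  Finset.univ.filter fun j => G.dist i j = l

/-- The `l`-th order strength `s_i(l) = ∑_{j ∈ N_i(l)} w_ij(l)` of node `i`. -/
noncomputable def lStrength {n : ℕ} (G : SimpleGraph (Fin n)) (w : Fin n → Fin n → ℝ)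
    (i : Fin n) (l : ℕ) : ℝ :=
  ∑ j ∈ Nset G i l, wgeo G w i j l

/-- The matrix `P(l)`: `P(0)` is the identity matrix, and for `l ≥ 1` its `(i,j)` entry is
`w_ij(l)/s_i(l)` if `j ∈ N_i(l)` (a condition which in particular forces `N_i(l) ≠ ∅`),
and `0` otherwise. -/
noncomputable def Pmat {n : ℕ} (G : SimpleGraph (Fin n)) (w : Fin n → Fin n → ℝ)
    (l : ℕ) : Matrix (Fin n) (Fin n) ℝ :=
  if l = 0 then 1
  else Matrix.of fun i j =>
    if G.dist i j = l then wgeo G w i j l / lStrength G w i l else 0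


/-- The binary adjacency matrix of a nonnegative weight matrix `M`:
entry `(i,j)` is `1` iff `0 < M i j`, else `0`. -/
noncomputable def binAdj {n : ℕ} (M : Matrix (Fin n) (Fin n) ℝ) :
    Matrix (Fin n) (Fin n) ℝ :=
  Matrix.of fun i j => if 0 < M i j then (1 : ℝ) else 0

/-- The Barrat weighted clustering coefficient of node `i` for the (undirected) weighted
adjacency matrix `WG`: `c_i = [WG • A(G)²]_ii / (s_i (d_i - 1))`, where `A(G)` is the binary
adjacency matrix of `WG`, `s_i = ∑ j, WG i j` and `d_i = ∑ j, A(G) i j`. -/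
noncomputable def barratCC {n : ℕ} (WG : Matrix (Fin n) (Fin n) ℝ) (i : Fin n) : ℝ :=
  (WG * (binAdj WG) ^ 2) i i / ((∑ j, WG i j) * ((∑ j, binAdj WG i j) - 1))

/-- The Clemente–Grassi directed clustering coefficient of node `i` for the weight matrix `W`
of a directed graph:
`c_i^all = (1/2)[(W+Wᵀ)(A+Aᵀ)²]_ii / (s_i^tot (d_i^tot - 1) - 2 s_i^↔)`. -/
noncomputable def dirCC {n : ℕ} (W : Matrix (Fin n) (Fin n) ℝ) (i : Fin n) : ℝ :=
  (1 / 2) * ((W + Wᵀ) * (binAdj W + (binAdj W)ᵀ) ^ 2) i i /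
    ((∑ j, (W i j + W j i)) * ((∑ j, (binAdj W i j + binAdj W j i)) - 1)
      - 2 * ((1 / 2) * ∑ j, (W i j + W j i) * binAdj W i j * binAdj W j i))

/-- The undirected underlying graph `G` of the weighted directed graph `W`:
`i` and `j` are adjacent iff `i ≠ j` and `(W + Wᵀ) i j > 0`. -/
def underlying {n : ℕ} (W : Matrix (Fin n) (Fin n) ℝ) : SimpleGraph (Fin n) where
  Adj i j := i ≠ j ∧ 0 < (W + Wᵀ) i j
  symm := ⟨fun i j h =>
    ⟨h.1.symm, by
      have := h.2
      simp only [Matrix.add_apply, Matrix.transpose_apply] at this ⊢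
      linarith⟩⟩
  loopless := ⟨fun i h => h.1 rfl⟩

/-- **Proposition 1.** Let `D` be a finite weighted directed graph without
bilateral arcs (`W i j * W j i = 0` for `i ≠ j`), and let `G` be its undirected underlying
graph, with weighted adjacency matrix `W + Wᵀ`.  Then for every stratus
`l = 0, 1, …, diam(G)`, the vector of directed local `l`-adjacency clustering coefficients
equals one half of the vector of local `l`-adjacency clustering coefficients of `G`:
`c^all(l) = c(l)/2`. -/
theorem dir_l_adjacency_clustering_eq_half_undirected {n : ℕ}
    (W : Matrix (Fin n) (Fin n) ℝ)
    (hnonneg : ∀ i j, 0 ≤ W i j) (hdiag : ∀ i, W i i = 0)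
    (hnobil : ∀ i j, i ≠ j → W i j * W j i = 0)
    (hconn : (underlying W).Connected) :
    ∀ l ≤ (underlying W).diam,
      Pmat (underlying W) (fun a b => (W + Wᵀ) a b) l *ᵥ dirCC W
        = (1 / 2 : ℝ) • (Pmat (underlying W) (fun a b => (W + Wᵀ) a b) l *ᵥ barratCC (W + Wᵀ)) := by
  intro l _
  have hbin : binAdj W + (binAdj W)ᵀ = binAdj (W + Wᵀ) := by
    ext i j
    simp only [Matrix.add_apply, Matrix.transpose_apply, binAdj, Matrix.of_apply]
    by_cases hij : i = j
    · subst hij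
      simp [hdiag i, lt_irrefl]
    · have h0 := hnobil i j hij
      rcases mul_eq_zero.mp h0 with h | h
      · simp [h]
      · simp [h]
  have hcc : dirCC W = (1 / 2 : ℝ) • barratCC (W + Wᵀ) := by
    funext i
    have hrec : ∀ j, (W i j + W j i) * binAdj W i j * binAdj W j i = 0 := by
      intro j
      by_cases hij : i = j
      · subst hij; simp [hdiag i, binAdj]
      · rcases mul_eq_zero.mp (hnobil i j hij) with h | h
        · simp [binAdj, h]
        · simp [binAdj, h]
    simp only [dirCC, barratCC, hbin, Pi.smul_apply, smul_eq_mul]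
    rw [Finset.sum_congr rfl (fun j _ => hrec j)]
    have h1 : ∀ j, W i j + W j i = (W + Wᵀ) i j := fun j => rfl
    simp only [h1]
    have h2 : (∑ j, (binAdj W i j + binAdj W j i)) = ∑ j, binAdj (W + Wᵀ) i j := by
      rw [← hbin]; rfl
    rw [h2]
    simp
    ring
  rw [hcc, Matrix.mulVec_smul]
end

section
/- Let D be a finite weighted directed graph without bilateral arcs, with weight matrix W, binary adjacency A, and underlying undirected graph G with weighted adjacency W(G) = W + Wᵀ and binary adjacency A(G). Then for every node i, the directed clustering coefficient satisfies c_i^all = (1/2)·[W(G)·A(G)²]_ii / (s_i(1,G)(d_i(1,G) − 1)) = c_i / 2, where c_i is the Barrat weighted clustering coefficient of node i in G. -/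
open Matrix Finset

lemma binAdj_add_transpose {n : ℕ} (W : Matrix (Fin n) (Fin n) ℝ)
    (hnonneg : ∀ i j, 0 ≤ W i j) (hdiag : ∀ i, W i i = 0)
    (hnobil : ∀ i j, i ≠ j → W i j * W j i = 0) :
    binAdj (W + Wᵀ) = binAdj W + (binAdj W)ᵀ := by
  ext i j
  simp only [binAdj, Matrix.add_apply, Matrix.transpose_apply, Matrix.of_apply]
  rcases eq_or_ne i j with rfl | hij
  · simp [hdiag i]
  · have h := hnobil i j hij
    rcases mul_eq_zero.mp h with h0 | h0
    · by_cases hp : 0 < W j i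
      · simp [h0, hp]
      · have hq : W j i = 0 := le_antisymm (not_lt.mp hp) (hnonneg j i)
        simp [h0, hq]
    · by_cases hp : 0 < W i j
      · simp [h0, hp]
      · have hq : W i j = 0 := le_antisymm (not_lt.mp hp) (hnonneg i j)
        simp [h0, hq]

/-- **Proposition, pointwise form.** If the weighted directed graph `W` has no
bilateral arcs, then for every node `i` the directed clustering coefficient satisfies
`c_i^all = (1/2)·[W(G)·A(G)²]_ii / (s_i(1,G)(d_i(1,G) − 1)) = c_i / 2`, where `W(G) = W + Wᵀ`
is the weighted adjacency matrix of the undirected underlying graph `G` and `c_i` is the Barrat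
weighted clustering coefficient of `i` in `G`. -/
theorem dirCC_eq_half_barratCC {n : ℕ}
    (W : Matrix (Fin n) (Fin n) ℝ)
    (hnonneg : ∀ i j, 0 ≤ W i j) (hdiag : ∀ i, W i i = 0)
    (hnobil : ∀ i j, i ≠ j → W i j * W j i = 0) (i : Fin n) :
    dirCC W i
        = (1 / 2) * ((W + Wᵀ) * (binAdj (W + Wᵀ)) ^ 2) i i /
            ((∑ j, (W + Wᵀ) i j) * ((∑ j, binAdj (W + Wᵀ) i j) - 1))
      ∧ dirCC W i = barratCC (W + Wᵀ) i / 2 := by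
  have hB := binAdj_add_transpose W hnonneg hdiag hnobil
  have hzero : ∀ j, (W i j + W j i) * binAdj W i j * binAdj W j i = 0 := by
    intro j
    rcases eq_or_ne i j with rfl | hij
    · simp [binAdj, hdiag i]
    · rcases mul_eq_zero.mp (hnobil i j hij) with h0 | h0
      · have : ¬ 0 < W i j := by rw [h0]; exact lt_irrefl 0
        simp [binAdj, this]
      · have : ¬ 0 < W j i := by rw [h0]; exact lt_irrefl 0
        simp [binAdj, this]
  have hdir : dirCC W i
      = (1 / 2) * ((W + Wᵀ) * (binAdj (W + Wᵀ)) ^ 2) i i /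
          ((∑ j, (W + Wᵀ) i j) * ((∑ j, binAdj (W + Wᵀ) i j) - 1)) := by
    unfold dirCC
    rw [hB]
    congr 1
    rw [Finset.sum_congr rfl (fun j _ => hzero j)]
    simp [Matrix.add_apply, Matrix.transpose_apply]
  refine ⟨hdir, ?_⟩
  rw [hdir]
  unfold barratCC
  ring
end
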